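/- (Mellin inversion for the theta series.) For every real t > 0 and every real c > 1, ∑_{n=1}^∞ e^{-π n² t} = (1/(2π)) ∫_ℝ t^{-(c+iu)} π^{-(c+iu)} Γ(c+iu) ζ(2(c+iu)) du, where the integral over u ∈ ℝ converges absolutely. -/

import Mathlib

open MeasureTheory Real Set Filter Complex

noncomputable def thetaF : ℝ → ℂ := fun x => ((HurwitzZeta.cosKernel 0 x : ℂ) - 1) / 2

lemma thetaF_hasSum_real {x : ℝ} (hx : 0 < x) :
    HasSum (fun n : ℕ => Real.exp (-π * ((n : ℝ) + 1) ^ 2 * x))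
      ((HurwitzZeta.cosKernel 0 x - 1) / 2) := by
  have h := HurwitzZeta.hasSum_nat_cosKernel₀ 0 hx
  simp only [mul_zero, zero_mul, Real.cos_zero, mul_one, QuotientAddGroup.mk_zero] at h
  have h2 := h.div_const 2
  refine h2.congr_fun fun n => ?_
  ring

lemma thetaF_hasSum {x : ℝ} (hx : 0 < x) :
    HasSum (fun n : ℕ => ((Real.exp (-π * ((n : ℝ) + 1) ^ 2 * x) : ℝ) : ℂ)) (thetaF x) := by
  have := Complex.hasSum_ofReal.mpr (thetaF_hasSum_real hx)
  simpa [thetaF] using this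

lemma my_summable {p : ℝ} (hp : 1 < p) :
    Summable (fun n : ℕ => ((n : ℝ) + 1) ^ (-p)) := by
  have h0 : Summable (fun n : ℕ => (n : ℝ) ^ (-p)) :=
    (Real.summable_nat_rpow (p := -p)).mpr (by linarith)
  have h1 := (summable_nat_add_iff 1).mpr h0
  exact h1.congr fun n => by push_cast; ring_nf

lemma thetaF_mellin {w : ℂ} (hw : 1 < w.re) :
    mellin thetaF w = (π : ℂ) ^ (-w) * Complex.Gamma w * riemannZeta (2 * w) := by
  have h2w : (2 * w).re = 2 * w.re := by simp
  have hs : 0 < (2 * w).re := by rw [h2w]; linarith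
  have hF : ∀ x ∈ Ioi (0 : ℝ), HasSum
      (fun n : ℕ => if ((n : ℝ) + 1) = 0 then 0 else
        (1 : ℂ) * Real.exp (-π * ((n : ℝ) + 1) ^ 2 * x)) (thetaF x) := by
    intro x hx
    refine (thetaF_hasSum hx).congr_fun fun n => ?_
    rw [if_neg (by positivity), one_mul]
  have h_sum : Summable fun n : ℕ => ‖(1 : ℂ)‖ / |(n : ℝ) + 1| ^ (2 * w).re := by
    refine (my_summable (p := (2 * w).re) (by rw [h2w]; linarith)).congr fun n => ?_
    rw [norm_one, _root_.abs_of_nonneg (by positivity : (0:ℝ) ≤ (n:ℝ)+1), one_div, Real.rpow_neg (by positivity)]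
  have H := hasSum_mellin_pi_mul_sq (a := fun _ : ℕ => (1 : ℂ))
    (r := fun n : ℕ => (n : ℝ) + 1) hs hF h_sum
  rw [show (2 * w) / 2 = w by ring] at H
  have := H.tsum_eq
  rw [← this]
  calc ∑' n : ℕ, Complex.Gammaℝ (2 * w) * 1 / ((|(n : ℝ) + 1| : ℝ) : ℂ) ^ (2 * w)
      = ∑' n : ℕ, Complex.Gammaℝ (2 * w) * (1 / ((n : ℂ) + 1) ^ (2 * w)) := by
        refine tsum_congr fun n => ?_
        rw [mul_one, mul_one_div]
        congr 2
        rw [_root_.abs_of_nonneg (by positivity : (0:ℝ) ≤ (n:ℝ)+1)]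
        push_cast
        ring
    _ = Complex.Gammaℝ (2 * w) * ∑' n : ℕ, 1 / ((n : ℂ) + 1) ^ (2 * w) := tsum_mul_left
    _ = Complex.Gammaℝ (2 * w) * riemannZeta (2 * w) := by
        rw [← zeta_eq_tsum_one_div_nat_add_one_cpow (by rw [h2w]; linarith)]
    _ = (π : ℂ) ^ (-w) * Complex.Gamma w * riemannZeta (2 * w) := by
        rw [Complex.Gammaℝ_def, show -(2 * w) / 2 = -w by ring, show 2 * w / 2 = w by ring,
          mul_assoc]

lemma thetaF_mellinConvergent {c : ℝ} (hc : 1 < c) : MellinConvergent thetaF (c : ℂ) := by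
  have h := (HurwitzZeta.hurwitzEvenFEPair 0).hasMellin (s := (c : ℂ))
    (by simpa [HurwitzZeta.hurwitzEvenFEPair] using by linarith : (HurwitzZeta.hurwitzEvenFEPair 0).k < (c : ℂ).re)
  have h1 : MellinConvergent (fun x => ((HurwitzZeta.cosKernel 0 x : ℂ)) - 1) (c : ℂ) := by
    have := h.1
    simp only [HurwitzZeta.hurwitzEvenFEPair, Function.comp_apply, if_pos rfl,
      HurwitzZeta.evenKernel_eq_cosKernel_of_zero] at this
    exact this
  exact h1.div_const 2

lemma my_norm_Gamma_le {z : ℂ} (hz : 0 < z.re) : ‖Complex.Gamma z‖ ≤ Real.Gamma z.re := by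
  rw [Complex.Gamma_eq_integral hz, Real.Gamma_eq_integral hz, Complex.GammaIntegral]
  refine (norm_integral_le_integral_norm _).trans_eq ?_
  refine setIntegral_congr_fun measurableSet_Ioi fun x hx => ?_
  rw [norm_mul, Complex.norm_real, Real.norm_eq_abs,
    _root_.abs_of_nonneg (Real.exp_pos _).le, Complex.norm_cpow_eq_rpow_re_of_pos hx,
    Complex.sub_re, Complex.one_re]

lemma my_Gamma_bound {c u : ℝ} (hc : 1 ≤ c) :
    ‖Complex.Gamma ((c : ℂ) + (u : ℂ) * Complex.I)‖ ≤ Real.Gamma (c + 2) / (1 + u ^ 2) := by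
  set z : ℂ := (c : ℂ) + (u : ℂ) * Complex.I with hz
  have hre : z.re = c := by simp [hz]
  have hz0 : z ≠ 0 := fun h => by rw [h] at hre; simp at hre; linarith
  have hz1 : z + 1 ≠ 0 := fun h => by
    have := congrArg Complex.re h
    simp [hre] at this; linarith
  have key : Complex.Gamma (z + 2) = (z + 1) * z * Complex.Gamma z := by
    have h1 := Complex.Gamma_add_one z hz0
    have h2 := Complex.Gamma_add_one (z + 1) hz1
    rw [show z + 1 + 1 = z + 2 by ring] at h2
    rw [h2, h1]; ring
  have hnorm : ‖Complex.Gamma (z + 2)‖ = ‖z + 1‖ * ‖z‖ * ‖Complex.Gamma z‖ := by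
    rw [key, norm_mul, norm_mul]
  have hG2 : ‖Complex.Gamma (z + 2)‖ ≤ Real.Gamma (c + 2) := by
    have := my_norm_Gamma_le (z := z + 2) (by simp [hre]; linarith)
    simpa [hre] using this
  have hzsq : (1 : ℝ) + u ^ 2 ≤ ‖z‖ * ‖z + 1‖ := by
    have e1 : ‖z‖ = Real.sqrt (c ^ 2 + u ^ 2) := by
      rw [hz, Complex.norm_def, Complex.normSq_add_mul_I]
    have e2 : ‖z + 1‖ = Real.sqrt ((c + 1) ^ 2 + u ^ 2) := by
      rw [show z + 1 = ((c + 1 : ℝ) : ℂ) + (u : ℂ) * Complex.I by rw [hz]; push_cast; ring,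
        Complex.norm_def, Complex.normSq_add_mul_I]
    have l1 : Real.sqrt (1 + u ^ 2) ≤ ‖z‖ := by
      rw [e1]; exact Real.sqrt_le_sqrt (by nlinarith)
    have l2 : Real.sqrt (1 + u ^ 2) ≤ ‖z + 1‖ := by
      rw [e2]; exact Real.sqrt_le_sqrt (by nlinarith)
    calc (1 : ℝ) + u ^ 2 = Real.sqrt (1 + u ^ 2) * Real.sqrt (1 + u ^ 2) := by
          rw [Real.mul_self_sqrt (by positivity)]
      _ ≤ ‖z‖ * ‖z + 1‖ := by
          exact mul_le_mul l1 l2 (Real.sqrt_nonneg _) (norm_nonneg _)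
  rw [le_div_iff₀ (by positivity)]
  calc ‖Complex.Gamma z‖ * (1 + u ^ 2) ≤ ‖Complex.Gamma z‖ * (‖z‖ * ‖z + 1‖) := by
        exact mul_le_mul_of_nonneg_left hzsq (norm_nonneg _)
    _ = ‖Complex.Gamma (z + 2)‖ := by rw [hnorm]; ring
    _ ≤ Real.Gamma (c + 2) := hG2

lemma my_zeta_bound {s : ℂ} (hs : 1 < s.re) :
    ‖riemannZeta s‖ ≤ ∑' n : ℕ, ((n : ℝ) + 1) ^ (-s.re) := by
  rw [zeta_eq_tsum_one_div_nat_add_one_cpow hs]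
  have hnorm : ∀ n : ℕ, ‖1 / ((n : ℂ) + 1) ^ s‖ = ((n : ℝ) + 1) ^ (-s.re) := by
    intro n
    rw [norm_div, norm_one,
      show ((n : ℂ) + 1) = (((n : ℝ) + 1 : ℝ) : ℂ) by push_cast; ring,
      Complex.norm_cpow_eq_rpow_re_of_pos (by positivity), one_div,
      Real.rpow_neg (by positivity)]
  have hsum : Summable fun n : ℕ => ‖1 / ((n : ℂ) + 1) ^ s‖ := by
    refine (my_summable hs).congr fun n => (hnorm n).symm
  refine (norm_tsum_le_tsum_norm hsum).trans_eq (tsum_congr hnorm)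

lemma my_continuous (t : ℝ) (ht : 0 < t) (c : ℝ) (hc : 1 < c) :
    Continuous (fun u : ℝ =>
      (t : ℂ) ^ (-((c : ℂ) + (u : ℂ) * Complex.I)) *
        (π : ℂ) ^ (-((c : ℂ) + (u : ℂ) * Complex.I)) *
        Complex.Gamma ((c : ℂ) + (u : ℂ) * Complex.I) *
        riemannZeta (2 * ((c : ℂ) + (u : ℂ) * Complex.I))) := by
  have hline : Continuous fun u : ℝ => (c : ℂ) + (u : ℂ) * Complex.I := by
    continuity
  haveI : NeZero ((t : ℂ)) := ⟨Complex.ofReal_ne_zero.mpr ht.ne'⟩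
  haveI : NeZero ((π : ℂ)) := ⟨Complex.ofReal_ne_zero.mpr Real.pi_ne_zero⟩
  have hre : ∀ u : ℝ, ((c : ℂ) + (u : ℂ) * Complex.I).re = c := by intro u; simp
  refine ((((continuous_const_cpow (t : ℂ)).comp hline.neg).mul
    ((continuous_const_cpow (π : ℂ)).comp hline.neg)).mul ?_).mul ?_
  · refine continuous_iff_continuousAt.mpr fun u => ?_
    refine (Complex.differentiableAt_Gamma _ fun m => ?_).continuousAt.comp
      hline.continuousAt
    intro h
    have := congrArg Complex.re h
    rw [hre u] at this
    simp at this
    linarith [(by positivity : (0:ℝ) ≤ (m : ℝ))]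
  · refine continuous_iff_continuousAt.mpr fun u => ?_
    refine (differentiableAt_riemannZeta ?_).continuousAt.comp
      ((continuous_const.mul hline).continuousAt)
    intro h
    have := congrArg Complex.re h
    simp [hre u] at this
    linarith

lemma my_integrable (t : ℝ) (ht : 0 < t) (c : ℝ) (hc : 1 < c) :
    Integrable (fun u : ℝ =>
      (t : ℂ) ^ (-((c : ℂ) + (u : ℂ) * Complex.I)) *
        (π : ℂ) ^ (-((c : ℂ) + (u : ℂ) * Complex.I)) *
        Complex.Gamma ((c : ℂ) + (u : ℂ) * Complex.I) *
        riemannZeta (2 * ((c : ℂ) + (u : ℂ) * Complex.I))) := by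
  set Z : ℝ := ∑' n : ℕ, ((n : ℝ) + 1) ^ (-(2 * c)) with hZdef
  have hZ0 : 0 ≤ Z := tsum_nonneg fun n => Real.rpow_nonneg (by positivity) _
  refine Integrable.mono' ((integrable_inv_one_add_sq).const_mul
    (t ^ (-c) * π ^ (-c) * Real.Gamma (c + 2) * Z))
    (my_continuous t ht c hc).aestronglyMeasurable (Eventually.of_forall fun u => ?_)
  set z : ℂ := (c : ℂ) + (u : ℂ) * Complex.I with hzd
  have hre : z.re = c := by simp [hzd]
  have h1 : ‖(t : ℂ) ^ (-z)‖ = t ^ (-c) := by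
    rw [Complex.norm_cpow_eq_rpow_re_of_pos ht]
    simp [hre]
  have h2 : ‖(π : ℂ) ^ (-z)‖ = π ^ (-c) := by
    rw [Complex.norm_cpow_eq_rpow_re_of_pos Real.pi_pos]
    simp [hre]
  have h3 : ‖Complex.Gamma z‖ ≤ Real.Gamma (c + 2) / (1 + u ^ 2) := my_Gamma_bound hc.le
  have h4 : ‖riemannZeta (2 * z)‖ ≤ Z := by
    have := my_zeta_bound (s := 2 * z) (by simp [hre]; linarith)
    rw [show (2 * z).re = 2 * c by simp [hre]] at this
    simpa [hZdef] using this
  calc ‖(t : ℂ) ^ (-z) * (π : ℂ) ^ (-z) * Complex.Gamma z * riemannZeta (2 * z)‖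
      = t ^ (-c) * π ^ (-c) * ‖Complex.Gamma z‖ * ‖riemannZeta (2 * z)‖ := by
        rw [norm_mul, norm_mul, norm_mul, h1, h2]
    _ ≤ t ^ (-c) * π ^ (-c) * (Real.Gamma (c + 2) / (1 + u ^ 2)) * Z := by
        have hG0 : (0:ℝ) ≤ Real.Gamma (c + 2) / (1 + u ^ 2) :=
          (norm_nonneg _).trans h3
        gcongr
    _ = t ^ (-c) * π ^ (-c) * Real.Gamma (c + 2) * Z * (1 + u ^ 2)⁻¹ := by
        ring

/-- Mellin inversion for the theta series: for `t > 0` and `c > 1`,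
`∑_{n=1}^∞ e^{-π n² t} = (1/2π) ∫_ℝ t^{-(c+iu)} π^{-(c+iu)} Γ(c+iu) ζ(2(c+iu)) du`,
the integral converging absolutely. -/
theorem theta_mellin_inversion (t : ℝ) (ht : 0 < t) (c : ℝ) (hc : 1 < c) :
    MeasureTheory.Integrable (fun u : ℝ =>
      (t : ℂ) ^ (-((c : ℂ) + (u : ℂ) * Complex.I)) *
        (Real.pi : ℂ) ^ (-((c : ℂ) + (u : ℂ) * Complex.I)) *
        Complex.Gamma ((c : ℂ) + (u : ℂ) * Complex.I) *
        riemannZeta (2 * ((c : ℂ) + (u : ℂ) * Complex.I))) ∧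
    ((∑' n : ℕ, Real.exp (-Real.pi * ((n : ℝ) + 1) ^ 2 * t) : ℝ) : ℂ) =
      ((1 / (2 * Real.pi) : ℝ) : ℂ) *
        ∫ u : ℝ, (t : ℂ) ^ (-((c : ℂ) + (u : ℂ) * Complex.I)) *
          (Real.pi : ℂ) ^ (-((c : ℂ) + (u : ℂ) * Complex.I)) *
          Complex.Gamma ((c : ℂ) + (u : ℂ) * Complex.I) *
          riemannZeta (2 * ((c : ℂ) + (u : ℂ) * Complex.I)) := by
  refine ⟨my_integrable t ht c hc, ?_⟩
  have hre : ∀ u : ℝ, ((c : ℂ) + (u : ℂ) * Complex.I).re = c := by intro u; simp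
  have hvert : Complex.VerticalIntegrable (mellin thetaF) c := by
    refine (my_integrable 1 one_pos c hc).congr (Eventually.of_forall fun u => ?_)
    show _ = mellin thetaF ((c : ℂ) + (u : ℂ) * Complex.I)
    rw [thetaF_mellin (by rw [hre u]; exact hc)]
    simp
  have hcont : ContinuousAt thetaF t := by
    have h0 := (HurwitzZeta.continuousOn_cosKernel 0).continuousAt (isOpen_Ioi.mem_nhds ht)
    exact ((Complex.continuous_ofReal.continuousAt.comp h0).sub continuousAt_const).div_const 2
  have hinv := mellinInv_mellin_eq c thetaF ht (thetaF_mellinConvergent hc) hvert hcont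
  rw [mellinInv] at hinv
  have hpt : ∀ u : ℝ, (t : ℂ) ^ (-((c : ℂ) + (u : ℂ) * Complex.I)) •
      mellin thetaF ((c : ℂ) + (u : ℂ) * Complex.I) =
      (t : ℂ) ^ (-((c : ℂ) + (u : ℂ) * Complex.I)) *
        (π : ℂ) ^ (-((c : ℂ) + (u : ℂ) * Complex.I)) *
        Complex.Gamma ((c : ℂ) + (u : ℂ) * Complex.I) *
        riemannZeta (2 * ((c : ℂ) + (u : ℂ) * Complex.I)) := by
    intro u
    rw [thetaF_mellin (by rw [hre u]; exact hc), smul_eq_mul]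
    ring
  simp_rw [hpt] at hinv
  have hlhs : ((∑' n : ℕ, Real.exp (-Real.pi * ((n : ℝ) + 1) ^ 2 * t) : ℝ) : ℂ) = thetaF t := by
    rw [(thetaF_hasSum_real ht).tsum_eq, thetaF]
    push_cast
    ring
  rw [hlhs, ← hinv]
  simp [Complex.real_smul]
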